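/- The following formal power series identity holds: ∏_{i≥1} (1-q^i) / ((1 - t q^{i-1/2})(1 - t^{-1} q^{i-1/2})) = ∑_{j,k ≥ 0} [q^{k/2} t^k / ((1-q)⋯(1-q^k))] · q^{jk} · [q^{j/2} t^{-j} / ((1-q)⋯(1-q^j))], where empty products equal 1. -/

import Mathlib

/-!
STATEMENT 1: The formal power series identity
∏_{i≥1} (1-q^i) / ((1 - t q^{i-1/2})(1 - t^{-1} q^{i-1/2}))
  = ∑_{j,k ≥ 0} [q^{k/2} t^k / ((1-q)⋯(1-q^k))] · q^{jk} · [q^{j/2} t^{-j} / ((1-q)⋯(1-q^j))],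
with empty products equal to 1.  We work in `PowerSeries R` with
`R = LaurentPolynomial ℚ` (Laurent polynomials in `t`); the power series
variable `X` plays the role of `q^{1/2}` (so `q^i = X^(2i)`), and
`(1-q)⋯(1-q^m) = ∏_{i=1}^m (1-q^i)`.  Division is expressed via `Ring.inverse`
(all the denominators are units, having constant term 1), and the infinite
product/sum are taken in the product (coefficientwise discrete) topology.
-/

open PowerSeries

noncomputable section

abbrev R : Type := LaurentPolynomial ℚ

instance : TopologicalSpace R := ⊥

instance : TopologicalSpace (PowerSeries R) :=
  inferInstanceAs (TopologicalSpace ((Unit →₀ ℕ) → R))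

namespace SB

open Finset LaurentPolynomial

def Q (k : ℕ) : PowerSeries R := ∏ i ∈ range k, (1 - (X : PowerSeries R) ^ (2*(i+1)))

def A (z : PowerSeries R) (k : ℕ) : PowerSeries R := ∏ i ∈ range k, (z - X ^ (2*(i+1)))

def W (z : PowerSeries R) (k : ℕ) : PowerSeries R := ∏ i ∈ range k, (z * X ^ (2*i))

def e (m : ℕ) (z : PowerSeries R) : PowerSeries R :=
  ∑ j ∈ range m, z ^ j * Ring.inverse (Q j)

def h (m : ℕ) (z : PowerSeries R) : PowerSeries R :=
  ∑ k ∈ range m, A z k * Ring.inverse (Q k)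

def f (m : ℕ) (z : PowerSeries R) : PowerSeries R :=
  ∑ k ∈ range m, W z k * Ring.inverse (Q k)

lemma isUnit_of_cc_one {φ : PowerSeries R} (hc : constantCoeff φ = 1) : IsUnit φ := by
  rw [PowerSeries.isUnit_iff_constantCoeff, hc]; exact isUnit_one

lemma cc_X_pow (s : ℕ) (hs : s ≠ 0) : constantCoeff ((X : PowerSeries R)^s) = 0 := by
  rw [map_pow, PowerSeries.constantCoeff_X, zero_pow hs]

lemma isUnit_one_sub_X_pow (s : ℕ) (hs : s ≠ 0) : IsUnit (1 - (X : PowerSeries R)^s) :=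
  isUnit_of_cc_one (by rw [map_sub, map_one, cc_X_pow _ hs, sub_zero])

lemma isUnit_Q (k : ℕ) : IsUnit (Q k) := by
  induction k with
  | zero => simp [Q]
  | succ n ih =>
    rw [Q, prod_range_succ, ← Q]
    exact ih.mul (isUnit_one_sub_X_pow _ (by omega))

lemma Q_succ (k : ℕ) : Q (k+1) = Q k * (1 - X ^ (2*(k+1))) := prod_range_succ _ _

lemma invQ_succ (k : ℕ) :
    Ring.inverse (Q (k+1)) * (1 - X ^ (2*(k+1))) = Ring.inverse (Q k) := by
  rw [Q_succ, Ring.mul_inverse_rev, mul_right_comm,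
    Ring.inverse_mul_cancel _ (isUnit_one_sub_X_pow _ (by omega)), one_mul]

lemma e_succ (m : ℕ) (z : PowerSeries R) :
    e (m+1) z = e m z + z^m * Ring.inverse (Q m) := sum_range_succ _ _

lemma h_succ (m : ℕ) (z : PowerSeries R) :
    h (m+1) z = h m z + A z m * Ring.inverse (Q m) := sum_range_succ _ _

lemma f_succ (m : ℕ) (z : PowerSeries R) :
    f (m+1) z = f m z + W z m * Ring.inverse (Q m) := sum_range_succ _ _

lemma e_one (z : PowerSeries R) : e 1 z = 1 := by
  simp [e, Q]

lemma f_one (z : PowerSeries R) : f 1 z = 1 := by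
  simp [f, W, Q]

/-- Functional equation for the truncated Euler series `e`. -/
lemma FE_e (m : ℕ) (z : PowerSeries R) :
    (1 - z) * e (m+1) z = e (m+1) (X^2 * z) - z^(m+1) * Ring.inverse (Q m) := by
  induction m with
  | zero => simp [e_one, Q]; try ring
  | succ n ih =>
    have h1 := invQ_succ n
    rw [e_succ (n+1) z, e_succ (n+1) (X^2*z)]
    linear_combination ih + z^(n+1) * h1

lemma A_succ (z : PowerSeries R) (k : ℕ) :
    A z (k+1) = A z k * (z - X ^ (2*(k+1))) := prod_range_succ _ _

lemma A_shift (z : PowerSeries R) (k : ℕ) :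
    A (X^2 * z) (k+1) = X^(2*(k+1)) * (z - 1) * A z k := by
  induction k with
  | zero => simp [A]; try ring
  | succ n ih =>
    rw [A_succ, ih, A_succ]
    ring

/-- Functional equation for the truncated `h` series (q-binomial specialization). -/
lemma FE_h (m : ℕ) (z : PowerSeries R) :
    (1 - z) * h (m+1) z = h (m+1) (X^2 * z) - z * A z m * Ring.inverse (Q m) := by
  induction m with
  | zero => simp [h, A, Q]; try ring
  | succ n ih =>
    have h1 := invQ_succ n
    have h2 := A_shift z n
    have h3 := A_succ z n
    rw [h_succ (n+1) z, h_succ (n+1) (X^2*z)]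
    linear_combination ih + (z * A z n) * h1 - Ring.inverse (Q (n+1)) * h2 +
      Ring.inverse (Q (n+1)) * h3

lemma W_succ (z : PowerSeries R) (k : ℕ) :
    W z (k+1) = W z k * (z * X ^ (2*k)) := prod_range_succ _ _

lemma W_shift (z : PowerSeries R) (k : ℕ) :
    W (X^2 * z) k = W z k * X^(2*k) := by
  induction k with
  | zero => simp [W]
  | succ n ih =>
    rw [W_succ, ih, W_succ]
    ring

/-- Functional equation for the truncated `f` series (Euler's other identity). -/
lemma FE_f (m : ℕ) (z : PowerSeries R) :
    f (m+1) z = (1 + z) * f (m+1) (X^2 * z) - W z (m+1) * Ring.inverse (Q m) := by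
  induction m with
  | zero => simp [f, W, Q]; try ring
  | succ n ih =>
    have h1 := invQ_succ n
    have h2 := W_shift z (n+1)
    have h3 := W_succ z (n+1)
    rw [f_succ (n+1) z, f_succ (n+1) (X^2*z)]
    linear_combination ih + W z (n+1) * h1 - (1+z) * Ring.inverse (Q (n+1)) * h2 +
      Ring.inverse (Q (n+1)) * h3


/-! ### Divisibility helpers -/

lemma pow_dvd_of_dvd_pow {z : PowerSeries R} {d : ℕ} (hz : (X:PowerSeries R)^d ∣ z)
    (c k : ℕ) (h : c ≤ k*d) : (X:PowerSeries R)^c ∣ z^k := by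
  refine dvd_trans (pow_dvd_pow X h) (dvd_trans ?_ (pow_dvd_pow_of_dvd hz k))
  rw [← pow_mul, mul_comm d k]

lemma dvd_A_pow {z : PowerSeries R} (hz : (X:PowerSeries R) ∣ z) (k : ℕ) :
    (X:PowerSeries R)^k ∣ A z k := by
  induction k with
  | zero => simp
  | succ n ih =>
    rw [A_succ, pow_succ]
    exact mul_dvd_mul ih (dvd_sub hz (dvd_pow_self X (by omega)))

lemma dvd_A_sub (z : PowerSeries R) (k : ℕ) : z ∣ A z k - A 0 k := by
  induction k with
  | zero => simp [A]
  | succ n ih =>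
    have h1 : A z (n+1) - A 0 (n+1) =
        (A z n - A 0 n) * (z - X ^ (2*(n+1))) + A 0 n * z := by
      rw [A_succ, A_succ]; ring
    rw [h1]
    exact dvd_add (ih.mul_right _) (Dvd.intro_left _ rfl)

lemma dvd_W_pow {z : PowerSeries R} (hz : (X:PowerSeries R)^2 ∣ z) (k : ℕ) :
    (X:PowerSeries R)^(2*k) ∣ W z k := by
  induction k with
  | zero => simp
  | succ n ih =>
    rw [W_succ, show 2*(n+1) = 2*n + 2 by ring, pow_add]
    exact mul_dvd_mul ih (hz.mul_right _)

lemma dvd_e_sub_one (m : ℕ) (z : PowerSeries R) : z ∣ e (m+1) z - 1 := by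
  induction m with
  | zero => simp [e_one]
  | succ n ih =>
    rw [e_succ]
    have : e (n+1) z + z^(n+1) * Ring.inverse (Q (n+1)) - 1 =
        (e (n+1) z - 1) + z * (z^n * Ring.inverse (Q (n+1))) := by ring
    rw [this]
    exact dvd_add ih (Dvd.intro _ rfl)

lemma dvd_f_sub_one (m : ℕ) (z : PowerSeries R) : z ∣ f (m+1) z - 1 := by
  induction m with
  | zero => simp [f_one]
  | succ n ih =>
    rw [f_succ, W_succ]
    have : f (n+1) z + W z n * (z * X^(2*n)) * Ring.inverse (Q (n+1)) - 1 =
        (f (n+1) z - 1) + z * (W z n * X^(2*n) * Ring.inverse (Q (n+1))) := by ring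
    rw [this]
    exact dvd_add ih (Dvd.intro _ rfl)

/-! ### Telescoping congruences -/

lemma tel_e (m r c d : ℕ) (z : PowerSeries R) (hz : (X:PowerSeries R)^d ∣ z)
    (h1 : c ≤ (m+1)*d) :
    (X:PowerSeries R)^c ∣
      (∏ i ∈ range r, (1 - X^(2*i) * z)) * e (m+1) z - e (m+1) (X^(2*r) * z) := by
  induction r with
  | zero => simp
  | succ n ih =>
    have key := FE_e m (X^(2*n) * z)
    have hx : (X:PowerSeries R)^2 * (X^(2*n)*z) = X^(2*(n+1))*z := by
      rw [← mul_assoc, ← pow_add]; ring_nf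
    rw [hx] at key
    have hsplit : (∏ i ∈ range (n+1), (1 - X^(2*i) * z)) * e (m+1) z -
        e (m+1) (X^(2*(n+1)) * z) =
        (1 - X^(2*n) * z) * ((∏ i ∈ range n, (1 - X^(2*i) * z)) * e (m+1) z -
          e (m+1) (X^(2*n) * z)) +
        ((1 - X^(2*n) * z) * e (m+1) (X^(2*n) * z) - e (m+1) (X^(2*(n+1)) * z)) := by
      rw [prod_range_succ]; ring
    rw [hsplit]
    refine dvd_add (ih.mul_left _) ?_
    rw [key]
    have : e (m+1) (X ^ (2 * (n + 1)) * z) - (X ^ (2 * n) * z) ^ (m + 1) * Ring.inverse (Q m)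
        - e (m+1) (X^(2*(n+1)) * z) = -((X ^ (2 * n) * z) ^ (m + 1) * Ring.inverse (Q m)) := by
      ring
    rw [this]
    refine (dvd_neg).mpr (Dvd.dvd.mul_right ?_ _)
    exact pow_dvd_of_dvd_pow (dvd_trans hz (Dvd.intro_left _ rfl)) c (m+1) h1

lemma tel_h (m r : ℕ) (z : PowerSeries R) (hz : (X:PowerSeries R) ∣ z) :
    (X:PowerSeries R)^(m+1) ∣
      (∏ i ∈ range r, (1 - X^(2*i) * z)) * h (m+1) z - h (m+1) (X^(2*r) * z) := by
  induction r with
  | zero => simp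
  | succ n ih =>
    have key := FE_h m (X^(2*n) * z)
    have hx : (X:PowerSeries R)^2 * (X^(2*n)*z) = X^(2*(n+1))*z := by
      rw [← mul_assoc, ← pow_add]; ring_nf
    rw [hx] at key
    have hsplit : (∏ i ∈ range (n+1), (1 - X^(2*i) * z)) * h (m+1) z -
        h (m+1) (X^(2*(n+1)) * z) =
        (1 - X^(2*n) * z) * ((∏ i ∈ range n, (1 - X^(2*i) * z)) * h (m+1) z -
          h (m+1) (X^(2*n) * z)) +
        ((1 - X^(2*n) * z) * h (m+1) (X^(2*n) * z) - h (m+1) (X^(2*(n+1)) * z)) := by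
      rw [prod_range_succ]; ring
    rw [hsplit]
    refine dvd_add (ih.mul_left _) ?_
    rw [key]
    have hz' : (X:PowerSeries R) ∣ X^(2*n) * z := hz.mul_left _
    have : h (m+1) (X ^ (2 * (n + 1)) * z) - X ^ (2 * n) * z * A (X ^ (2 * n) * z) m
          * Ring.inverse (Q m) - h (m+1) (X^(2*(n+1)) * z) =
        -((X ^ (2 * n) * z * A (X ^ (2 * n) * z) m) * Ring.inverse (Q m)) := by ring
    rw [this]
    refine (dvd_neg).mpr (Dvd.dvd.mul_right ?_ _)
    rw [pow_succ'];
    exact mul_dvd_mul hz' (dvd_A_pow hz' m)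

lemma tel_f (m r : ℕ) :
    (X:PowerSeries R)^(2*(m+1)) ∣
      f (m+1) (-X^2) - Q r * f (m+1) (-X^(2*(r+1))) := by
  induction r with
  | zero => norm_num [Q]
  | succ n ih =>
    have key := FE_f m (-X^(2*(n+1)))
    have hx : (X:PowerSeries R)^2 * (-X^(2*(n+1))) = -X^(2*(n+2)) := by
      rw [mul_neg, ← pow_add]; ring_nf
    rw [hx] at key
    have hsplit : f (m+1) (-X^2) - Q (n+1) * f (m+1) (-X^(2*(n+2))) =
        (f (m+1) (-X^2) - Q n * f (m+1) (-X^(2*(n+1)))) +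
        Q n * (f (m+1) (-X^(2*(n+1))) - (1 - X^(2*(n+1))) * f (m+1) (-X^(2*(n+2)))) := by
      rw [Q_succ]; ring
    rw [hsplit]
    refine dvd_add ih ?_
    have : f (m+1) (-X ^ (2 * (n + 1))) - (1 - X ^ (2 * (n + 1))) * f (m+1) (-X ^ (2 * (n + 2)))
        = -(W (-X^(2*(n+1))) (m+1) * Ring.inverse (Q m)) := by
      linear_combination key
    rw [this]
    refine Dvd.dvd.mul_left ((dvd_neg).mpr (Dvd.dvd.mul_right ?_ _)) _
    refine dvd_W_pow ?_ (m+1)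
    exact (dvd_neg).mpr (pow_dvd_pow X (by omega))

lemma h_zero_eq (m : ℕ) : h m 0 = f m (-X^2) := by
  unfold h f
  refine Finset.sum_congr rfl fun k _ => ?_
  congr 1
  unfold A W
  refine Finset.prod_congr rfl fun i _ => ?_
  rw [show 2*(i+1) = 2 + 2*i by ring, pow_add]
  ring

lemma L6 (m : ℕ) : (X:PowerSeries R)^(m+1) ∣ h (m+1) 0 - Q (m+1) := by
  rw [h_zero_eq]
  have h1 := tel_f m (m+1)
  have h2 : (X:PowerSeries R)^(m+1) ∣ Q (m+1) * (f (m+1) (-X^(2*(m+2))) - 1) := by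
    refine Dvd.dvd.mul_left ?_ _
    refine dvd_trans ?_ (dvd_f_sub_one m _)
    exact (dvd_neg).mpr (pow_dvd_pow X (by omega))
  have hsplit : f (m+1) (-X^2) - Q (m+1) =
      (f (m+1) (-X^2) - Q (m+1) * f (m+1) (-X^(2*(m+2)))) +
      Q (m+1) * (f (m+1) (-X^(2*(m+2))) - 1) := by ring
  rw [hsplit]
  exact dvd_add (dvd_trans (pow_dvd_pow X (by omega)) h1) h2

/-! ### The main finite congruence -/

def a : PowerSeries R := PowerSeries.C (R := R) (T 1) * X
def b : PowerSeries R := PowerSeries.C (R := R) (T (-1)) * X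

def fI (i : ℕ) : PowerSeries R :=
  (1 - (X : PowerSeries R) ^ (2 * (i + 1))) *
    Ring.inverse (1 - PowerSeries.C (R := R) (T 1) * (X : PowerSeries R) ^ (2 * i + 1)) *
    Ring.inverse (1 - PowerSeries.C (R := R) (T (-1)) * (X : PowerSeries R) ^ (2 * i + 1))

def gT (jk : ℕ × ℕ) : PowerSeries R :=
  (X : PowerSeries R) ^ jk.2 * PowerSeries.C (R := R) (T (jk.2 : ℤ)) * Ring.inverse (Q jk.2) *
    (X : PowerSeries R) ^ (2 * jk.1 * jk.2) *
    ((X : PowerSeries R) ^ jk.1 * PowerSeries.C (R := R) (T (-(jk.1 : ℤ))) * Ring.inverse (Q jk.1))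

lemma X_dvd_a : (X : PowerSeries R) ∣ a := Dvd.intro_left _ rfl
lemma X_dvd_b : (X : PowerSeries R) ∣ b := Dvd.intro_left _ rfl

lemma hab : a * b = (X : PowerSeries R)^2 := by
  have h1 : (PowerSeries.C (R := R)) (T 1) * (PowerSeries.C (R := R)) (T (-1)) = 1 := by
    rw [← map_mul, ← T_add]
    norm_num
  unfold a b
  linear_combination (X:PowerSeries R)^2 * h1

lemma ha_pow (k : ℕ) : a^k = PowerSeries.C (R := R) (T (k:ℤ)) * X^k := by
  unfold a
  rw [mul_pow, ← map_pow, T_pow, mul_one]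

lemma hb_pow (j : ℕ) : b^j = PowerSeries.C (R := R) (T (-(j:ℤ))) * X^j := by
  unfold b
  rw [mul_pow, ← map_pow, T_pow, show (j:ℤ) * (-1) = -(j:ℤ) by ring]

lemma aB_eq (k : ℕ) : a^k * ∏ i ∈ range k, (1 - X^(2*i) * b) = A a k := by
  induction k with
  | zero => simp [A]
  | succ n ih =>
    rw [prod_range_succ, A_succ, ← ih, pow_succ]
    linear_combination (-(a^n * (∏ i ∈ range n, (1 - X^(2*i) * b)) * X^(2*n))) * hab

lemma cc_of_X_dvd {g : PowerSeries R} (hg : (X:PowerSeries R) ∣ g) :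
    constantCoeff g = 0 := by
  obtain ⟨w, rfl⟩ := hg
  rw [map_mul, constantCoeff_X, zero_mul]

lemma isUnit_one_sub_X_dvd {g : PowerSeries R} (hg : (X:PowerSeries R) ∣ g) :
    IsUnit (1 - g) :=
  isUnit_of_cc_one (by rw [map_sub, map_one, cc_of_X_dvd hg, sub_zero])

lemma inv_prod (s : Finset ℕ) (g : ℕ → PowerSeries R) :
    Ring.inverse (∏ i ∈ s, g i) = ∏ i ∈ s, Ring.inverse (g i) := by
  induction s using Finset.cons_induction with
  | empty => simp
  | cons x s hx ih => rw [prod_cons, prod_cons, Ring.mul_inverse_rev, ih, mul_comm]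

lemma dvd_h_sub_h0 (m : ℕ) (w : PowerSeries R) : w ∣ h (m+1) w - h (m+1) 0 := by
  unfold h
  rw [← Finset.sum_sub_distrib]
  refine Finset.dvd_sum fun k _ => ?_
  rw [← sub_mul]
  exact (dvd_A_sub w k).mul_right _

theorem main_congr (m : ℕ) :
    (X:PowerSeries R)^(m+1) ∣
      (∏ i ∈ range (m+1), fI i) - ∑ jk ∈ range (m+1) ×ˢ range (m+1), gT jk := by
  set U : PowerSeries R := ∏ i ∈ range (m+1), (1 - X^(2*i) * a) with hU
  set V : PowerSeries R := ∏ i ∈ range (m+1), (1 - X^(2*i) * b) with hV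
  set S : PowerSeries R := ∑ jk ∈ range (m+1) ×ˢ range (m+1), gT jk with hS
  -- Step 1 : rewrite the double sum
  have s1 : S = ∑ k ∈ range (m+1), a^k * Ring.inverse (Q k) * e (m+1) (X^(2*k) * b) := by
    rw [hS, Finset.sum_product, Finset.sum_comm]
    refine Finset.sum_congr rfl fun k _ => ?_
    unfold e
    rw [Finset.mul_sum]
    refine Finset.sum_congr rfl fun j _ => ?_
    unfold gT
    simp only
    rw [ha_pow, mul_pow, hb_pow, ← pow_mul]
    ring
  -- Step 2 : kill the b-product with the Euler telescope
  have s2 : (X:PowerSeries R)^(m+1) ∣ V * S - h (m+1) a := by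
    rw [s1, Finset.mul_sum]
    unfold h
    rw [← Finset.sum_sub_distrib]
    refine Finset.dvd_sum fun k hk => ?_
    have hkM : k ≤ m+1 := le_of_lt (mem_range.mp hk)
    -- split V
    have hVsplit : V = (∏ i ∈ range k, (1 - X^(2*i) * b)) *
        ∏ i ∈ range ((m+1) - k), (1 - X^(2*i) * (X^(2*k) * b)) := by
      rw [hV, ← Finset.prod_range_mul_prod_Ico _ hkM]
      refine congrArg ((∏ i ∈ range k, (1 - X^(2*i) * b)) * ·) ?_
      rw [Finset.prod_Ico_eq_prod_range]
      refine Finset.prod_congr rfl fun i _ => ?_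
      rw [← mul_assoc, ← pow_add]
      ring_nf
    have hz : (X:PowerSeries R)^(2*k+1) ∣ X^(2*k) * b := by
      rw [pow_succ]
      exact mul_dvd_mul_left _ X_dvd_b
    have htel := tel_e m ((m+1) - k) ((m+1) - k) (2*k+1) (X^(2*k) * b) hz
      (le_trans (by omega) (Nat.le_mul_of_pos_right (m+1) (by omega)))
    have htail : (X:PowerSeries R)^(m+1-k) ∣ e (m+1) (X^(2*(m+1-k)) * (X^(2*k) * b)) - 1 := by
      refine dvd_trans ?_ (dvd_e_sub_one m _)
      exact (pow_dvd_pow X (by omega)).trans (Dvd.intro _ rfl)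
    have hck : (X:PowerSeries R)^(m+1-k) ∣
        (∏ i ∈ range ((m+1) - k), (1 - X^(2*i) * (X^(2*k) * b))) * e (m+1) (X^(2*k) * b) - 1 := by
      have := dvd_add htel htail
      simpa using this
    have hre : V * (a^k * Ring.inverse (Q k) * e (m+1) (X^(2*k) * b)) - A a k * Ring.inverse (Q k)
        = a^k * (((∏ i ∈ range ((m+1) - k), (1 - X^(2*i) * (X^(2*k) * b))) * e (m+1) (X^(2*k) * b) - 1)
          * ((∏ i ∈ range k, (1 - X^(2*i) * b)) * Ring.inverse (Q k))) := by
      rw [hVsplit, ← aB_eq]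
      ring
    rw [hre, show (X:PowerSeries R)^(m+1) = X^k * X^(m+1-k) by
      rw [← pow_add]; congr 1; omega]
    exact mul_dvd_mul (pow_dvd_pow_of_dvd X_dvd_a k) (hck.mul_right _)
  -- Step 3-6 : the a-side
  have s3 : (X:PowerSeries R)^(m+1) ∣ U * h (m+1) a - h (m+1) (X^(2*(m+1)) * a) := tel_h m (m+1) a X_dvd_a
  have s4 : (X:PowerSeries R)^(m+1) ∣ h (m+1) (X^(2*(m+1)) * a) - h (m+1) 0 :=
    dvd_trans ((pow_dvd_pow X (by omega)).trans (Dvd.intro _ rfl)) (dvd_h_sub_h0 m _)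
  have s5 : (X:PowerSeries R)^(m+1) ∣ h (m+1) 0 - Q (m+1) := L6 m
  have s6 : (X:PowerSeries R)^(m+1) ∣ U * V * S - Q (m+1) := by
    have hsplit : U * V * S - Q (m+1) = U * (V * S - h (m+1) a) + (U * h (m+1) a - h (m+1) (X^(2*(m+1)) * a))
        + (h (m+1) (X^(2*(m+1)) * a) - h (m+1) 0) + (h (m+1) 0 - Q (m+1)) := by ring
    rw [hsplit]
    exact dvd_add (dvd_add (dvd_add (s2.mul_left U) s3) s4) s5
  -- Step 7 : the product side
  have hUu : IsUnit U := by
    refine isUnit_of_cc_one ?_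
    rw [hU, map_prod]
    refine Finset.prod_eq_one fun i _ => ?_
    rw [map_sub, map_one, cc_of_X_dvd (X_dvd_a.mul_left _), sub_zero]
  have hVu : IsUnit V := by
    refine isUnit_of_cc_one ?_
    rw [hV, map_prod]
    refine Finset.prod_eq_one fun i _ => ?_
    rw [map_sub, map_one, cc_of_X_dvd (X_dvd_b.mul_left _), sub_zero]
  have s7 : (∏ i ∈ range (m+1), fI i) = Q (m+1) * Ring.inverse U * Ring.inverse V := by
    have h1 : ∀ i ∈ range (m+1), fI i = (1 - (X:PowerSeries R)^(2*(i+1))) *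
        Ring.inverse (1 - X^(2*i) * a) * Ring.inverse (1 - X^(2*i) * b) := by
      intro i _
      unfold fI
      rw [show PowerSeries.C (R := R) (T 1) * (X:PowerSeries R)^(2*i+1) = X^(2*i) * a by
            unfold a; rw [pow_succ]; ring,
          show PowerSeries.C (R := R) (T (-1)) * (X:PowerSeries R)^(2*i+1) = X^(2*i) * b by
            unfold b; rw [pow_succ]; ring]
    rw [Finset.prod_congr rfl h1, Finset.prod_mul_distrib, Finset.prod_mul_distrib,
      ← inv_prod, ← inv_prod, ← hU, ← hV]
    rfl
  -- Step 8-9 : conclude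
  have hU' : Ring.inverse U * U = 1 := Ring.inverse_mul_cancel _ hUu
  have hV' : Ring.inverse V * V = 1 := Ring.inverse_mul_cancel _ hVu
  have s8 : (∏ i ∈ range (m+1), fI i) - S =
      Ring.inverse U * Ring.inverse V * (Q (m+1) - U * V * S) := by
    linear_combination s7 + (S * Ring.inverse V * V) * hU' + S * hV'
  rw [s8]
  refine Dvd.dvd.mul_left ?_ _
  rw [show Q (m+1) - U * V * S = -(U * V * S - Q (m+1)) by ring]
  exact s6.neg_right

/-! ### Topology: convergence in the coefficientwise-discrete product topology -/

instance : DiscreteTopology R := ⟨rfl⟩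

instance : T2Space (PowerSeries R) :=
  inferInstanceAs (T2Space ((Unit →₀ ℕ) → R))

lemma coeff_apply' (φ : PowerSeries R) (d : Unit →₀ ℕ) :
    coeff (d default) φ = φ d := by
  conv_rhs => rw [show d = Finsupp.single default (d default) from Finsupp.unique_single d]
  rfl

lemma tendsto_of_coeff_eventually {ι : Type} (g : Finset ι → PowerSeries R)
    (p : PowerSeries R)
    (hc : ∀ n : ℕ, ∀ᶠ F in Filter.atTop, coeff n (g F) = coeff n p) :
    Filter.Tendsto g Filter.atTop (nhds p) := by
  have key : ∀ d : Unit →₀ ℕ, Filter.Tendsto (fun F => g F d) Filter.atTop (nhds (p d)) := by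
    intro d
    rw [nhds_discrete (α := R), Filter.tendsto_pure]
    filter_upwards [hc (d default)] with F hF
    calc g F d = coeff (d default) (g F) := (coeff_apply' _ _).symm
      _ = coeff (d default) p := hF
      _ = p d := coeff_apply' _ _
  exact tendsto_pi_nhds.mpr key

lemma hasSum_of_coeff {ι : Type} (g : ι → PowerSeries R) (p : PowerSeries R)
    (hc : ∀ n : ℕ, ∃ F₀ : Finset ι, ∀ F : Finset ι, F₀ ⊆ F →
      coeff n (∑ x ∈ F, g x) = coeff n p) : HasSum g p := by
  refine tendsto_of_coeff_eventually _ p fun n => ?_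
  obtain ⟨F₀, hF⟩ := hc n
  rw [Filter.eventually_atTop]
  exact ⟨F₀, fun F h => hF F h⟩

lemma hasProd_of_coeff {ι : Type} (g : ι → PowerSeries R) (p : PowerSeries R)
    (hc : ∀ n : ℕ, ∃ F₀ : Finset ι, ∀ F : Finset ι, F₀ ⊆ F →
      coeff n (∏ x ∈ F, g x) = coeff n p) : HasProd g p := by
  refine tendsto_of_coeff_eventually _ p fun n => ?_
  obtain ⟨F₀, hF⟩ := hc n
  rw [Filter.eventually_atTop]
  exact ⟨F₀, fun F h => hF F h⟩

lemma coeff_eq_of_dvd {n c : ℕ} (hcn : n < c) {p r : PowerSeries R}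
    (hd : (X:PowerSeries R)^c ∣ p - r) : coeff n p = coeff n r := by
  have h1 := (PowerSeries.X_pow_dvd_iff.mp hd) n hcn
  rw [map_sub] at h1
  exact sub_eq_zero.mp h1

lemma coeff_eq_zero_of_dvd {n c : ℕ} (hcn : n < c) {p : PowerSeries R}
    (hd : (X:PowerSeries R)^c ∣ p) : coeff n p = 0 :=
  (PowerSeries.X_pow_dvd_iff.mp hd) n hcn

/-! ### Order bounds for the individual factors/terms -/

lemma gT_dvd (j k : ℕ) : (X:PowerSeries R)^(j+k) ∣ gT (j, k) := by
  refine ⟨PowerSeries.C (R := R) (T (k:ℤ)) * Ring.inverse (Q k) * X^(2*j*k) *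
    (PowerSeries.C (R := R) (T (-(j:ℤ))) * Ring.inverse (Q j)), ?_⟩
  unfold gT
  rw [pow_add]
  ring

lemma fI_sub_one_dvd (i : ℕ) : (X:PowerSeries R)^(2*i+1) ∣ fI i - 1 := by
  have hd2 : (X:PowerSeries R) ∣ PowerSeries.C (R := R) (T 1) * X^(2*i+1) :=
    ((dvd_pow_self (X:PowerSeries R) (Nat.succ_ne_zero _))).mul_left _
  have hd3 : (X:PowerSeries R) ∣ PowerSeries.C (R := R) (T (-1)) * X^(2*i+1) :=
    ((dvd_pow_self (X:PowerSeries R) (Nat.succ_ne_zero _))).mul_left _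
  have hu2 : (1 - PowerSeries.C (R := R) (T 1) * X^(2*i+1)) *
      Ring.inverse (1 - PowerSeries.C (R := R) (T 1) * (X:PowerSeries R)^(2*i+1)) = 1 :=
    Ring.mul_inverse_cancel _ (isUnit_one_sub_X_dvd hd2)
  have hu3 : (1 - PowerSeries.C (R := R) (T (-1)) * X^(2*i+1)) *
      Ring.inverse (1 - PowerSeries.C (R := R) (T (-1)) * (X:PowerSeries R)^(2*i+1)) = 1 :=
    Ring.mul_inverse_cancel _ (isUnit_one_sub_X_dvd hd3)
  have key : fI i - 1 =
      Ring.inverse (1 - PowerSeries.C (R := R) (T 1) * (X:PowerSeries R)^(2*i+1)) *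
        Ring.inverse (1 - PowerSeries.C (R := R) (T (-1)) * (X:PowerSeries R)^(2*i+1)) *
        (PowerSeries.C (R := R) (T 1) * X^(2*i+1) + PowerSeries.C (R := R) (T (-1)) * X^(2*i+1) -
          PowerSeries.C (R := R) (T 1) * X^(2*i+1) * (PowerSeries.C (R := R) (T (-1)) * X^(2*i+1)) - X^(2*(i+1))) := by
    unfold fI
    linear_combination ((1 - PowerSeries.C (R := R) (T (-1)) * (X:PowerSeries R)^(2*i+1)) *
      Ring.inverse (1 - PowerSeries.C (R := R) (T (-1)) * (X:PowerSeries R)^(2*i+1))) * hu2 + hu3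
  rw [key]
  refine Dvd.dvd.mul_left ?_ _
  have hp : (X:PowerSeries R)^(2*i+1) ∣ X^(2*i+1) := dvd_rfl
  refine dvd_sub (dvd_sub (dvd_add (hp.mul_left _) (hp.mul_left _)) ?_) ?_
  · exact ((hp.mul_left _).mul_left _)
  · exact pow_dvd_pow X (by omega)

lemma prod_sub_one_dvd (s : Finset ℕ) (g : ℕ → PowerSeries R) (c : ℕ)
    (hg : ∀ i ∈ s, (X:PowerSeries R)^c ∣ g i - 1) :
    (X:PowerSeries R)^c ∣ (∏ i ∈ s, g i) - 1 := by
  induction s using Finset.cons_induction with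
  | empty => simp
  | cons x s hx ih =>
    rw [prod_cons]
    have h1 : g x * ∏ i ∈ s, g i - 1 = g x * ((∏ i ∈ s, g i) - 1) + (g x - 1) := by ring
    rw [h1]
    exact dvd_add ((ih fun i hi => hg i (Finset.mem_cons_of_mem hi)).mul_left _)
      (hg x (Finset.mem_cons_self x s))

/-! ### Final assembly -/

def Lim : PowerSeries R :=
  PowerSeries.mk fun n => coeff n (∑ jk ∈ range (n+1) ×ˢ range (n+1), gT jk)

lemma hasSum_gT : HasSum gT Lim := by
  refine hasSum_of_coeff _ _ fun n => ⟨range (n+1) ×ˢ range (n+1), fun F hF => ?_⟩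
  rw [← Finset.sum_sdiff hF, map_add]
  have h0 : coeff n (∑ x ∈ F \ range (n+1) ×ˢ range (n+1), gT x) = 0 := by
    refine coeff_eq_zero_of_dvd (Nat.lt_succ_self n) (Finset.dvd_sum fun x hx => ?_)
    obtain ⟨j, k⟩ := x
    have hx' := Finset.mem_sdiff.mp hx
    have : ¬(j < n+1 ∧ k < n+1) := by
      intro hc
      exact hx'.2 (Finset.mem_product.mpr ⟨Finset.mem_range.mpr hc.1, Finset.mem_range.mpr hc.2⟩)
    exact (pow_dvd_pow X (by omega)).trans (gT_dvd j k)
  rw [h0, zero_add, Lim, PowerSeries.coeff_mk]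

lemma hasProd_fI : HasProd fI Lim := by
  refine hasProd_of_coeff _ _ fun n => ⟨range (n+1), fun F hF => ?_⟩
  rw [← Finset.prod_sdiff hF]
  have h1 : (X:PowerSeries R)^(n+1) ∣ (∏ i ∈ F \ range (n+1), fI i) - 1 := by
    refine prod_sub_one_dvd _ _ _ fun i hi => ?_
    have hi' := Finset.mem_sdiff.mp hi
    have : ¬(i < n+1) := fun hc => hi'.2 (Finset.mem_range.mpr hc)
    exact (pow_dvd_pow X (by omega)).trans (fI_sub_one_dvd i)
  have h2 : (X:PowerSeries R)^(n+1) ∣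
      (∏ i ∈ F \ range (n+1), fI i) * ∏ i ∈ range (n+1), fI i -
        ∑ jk ∈ range (n+1) ×ˢ range (n+1), gT jk := by
    have hsplit : (∏ i ∈ F \ range (n+1), fI i) * ∏ i ∈ range (n+1), fI i -
        ∑ jk ∈ range (n+1) ×ˢ range (n+1), gT jk =
        ((∏ i ∈ F \ range (n+1), fI i) - 1) * ∏ i ∈ range (n+1), fI i +
        ((∏ i ∈ range (n+1), fI i) - ∑ jk ∈ range (n+1) ×ˢ range (n+1), gT jk) := by
      ring
    rw [hsplit]
    exact dvd_add (h1.mul_right _) (main_congr n)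
  have := coeff_eq_of_dvd (Nat.lt_succ_self n) h2
  rw [this, Lim, PowerSeries.coeff_mk]

end SB

theorem symplectic_boson_q_identity :
    ∏' i : ℕ,
        ((1 - (X : PowerSeries R) ^ (2 * (i + 1))) *
          Ring.inverse (1 - C (R := R) (LaurentPolynomial.T 1) * (X : PowerSeries R) ^ (2 * i + 1)) *
          Ring.inverse (1 - C (R := R) (LaurentPolynomial.T (-1)) * (X : PowerSeries R) ^ (2 * i + 1))) =
      ∑' jk : ℕ × ℕ,
        ((X : PowerSeries R) ^ jk.2 * C (R := R) (LaurentPolynomial.T (jk.2 : ℤ)) *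
            Ring.inverse (∏ i ∈ Finset.range jk.2, (1 - (X : PowerSeries R) ^ (2 * (i + 1)))) *
          (X : PowerSeries R) ^ (2 * jk.1 * jk.2) *
          ((X : PowerSeries R) ^ jk.1 * C (R := R) (LaurentPolynomial.T (-(jk.1 : ℤ))) *
            Ring.inverse (∏ i ∈ Finset.range jk.1, (1 - (X : PowerSeries R) ^ (2 * (i + 1)))))) := by
  have h1 : (∏' i : ℕ, SB.fI i) = ∑' jk : ℕ × ℕ, SB.gT jk := by
    rw [SB.hasProd_fI.tprod_eq, SB.hasSum_gT.tsum_eq]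
  exact h1
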